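/- If an element a of a ring R has a Hirano inverse b, then b is a Drazin inverse of a; that is, a - a²b is nilpotent, ab = ba, and b = bab. -/

import Mathlib

def IsHiranoInverse {R : Type*} [Ring R] (a b : R) : Prop :=
  IsNilpotent (a ^ 2 - a * b) ∧ a * b = b * a ∧ b = b * a * b

def IsDrazinInverse {R : Type*} [Ring R] (a b : R) : Prop :=
  IsNilpotent (a - a ^ 2 * b) ∧ a * b = b * a ∧ b = b * a * b

theorem hirano_nilpotent_aux {R : Type*} [Ring R] (a b : R)
    (hn : IsNilpotent (a ^ 2 - a * b)) (hc : a * b = b * a) (hb : b = b * a * b) :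
    IsNilpotent (a - a ^ 2 * b) := by
  have habab : a * b * (a * b) = a * b := by
    calc a * b * (a * b) = a * (b * a * b) := by noncomm_ring
    _ = a * b := by rw [← hb]
  have key : (a - a ^ 2 * b) ^ 2 = (a ^ 2 - a * b) * (1 - a * b) := by
    have h4 : a ^ 2 * b * (a ^ 2 * b) = a ^ 2 * (a * b) := by
      calc a ^ 2 * b * (a ^ 2 * b) = a ^ 2 * (b * a) * (a * b) := by noncomm_ring
      _ = a ^ 2 * (a * b) * (a * b) := by rw [← hc]
      _ = a ^ 2 * (a * b * (a * b)) := by noncomm_ring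
      _ = a ^ 2 * (a * b) := by rw [habab]
    have h5 : a ^ 2 * b * a = a * (a ^ 2 * b) := by
      calc a ^ 2 * b * a = a ^ 2 * (b * a) := by noncomm_ring
      _ = a ^ 2 * (a * b) := by rw [← hc]
      _ = a * (a ^ 2 * b) := by noncomm_ring
    have h6 : (a ^ 2 - a * b) * (1 - a * b)
        = a ^ 2 - a ^ 2 * (a * b) - (a * b - a * b * (a * b)) := by noncomm_ring
    calc (a - a ^ 2 * b) ^ 2
        = a ^ 2 - a * (a ^ 2 * b) - a ^ 2 * b * a + a ^ 2 * b * (a ^ 2 * b) := by noncomm_ring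
      _ = a ^ 2 - a * (a ^ 2 * b) - a * (a ^ 2 * b) + a ^ 2 * (a * b) := by rw [h4, h5]
      _ = a ^ 2 - a ^ 2 * (a * b) := by noncomm_ring
      _ = (a ^ 2 - a * b) * (1 - a * b) := by rw [h6, habab, sub_self, sub_zero]
  have hC : Commute a b := hc
  have hcomm : Commute (a ^ 2 - a * b) (1 - a * b) :=
    (Commute.one_right _).sub_right
      (Commute.sub_left (((Commute.refl a).mul_right hC).pow_left 2) (Commute.refl _))
  have hnil : IsNilpotent ((a - a ^ 2 * b) ^ 2) := by
    rw [key]; exact hcomm.isNilpotent_mul_right hn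
  obtain ⟨k, hk⟩ := hnil
  exact ⟨2 * k, by rw [pow_mul]; exact hk⟩

theorem stmt0 {R : Type*} [Ring R] (a b : R) (h : IsHiranoInverse a b) :
    IsDrazinInverse a b := by
  obtain ⟨hn, hc, hb⟩ := h
  exact ⟨hirano_nilpotent_aux a b hn hc hb, hc, hb⟩
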